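/- arXiv:1912.06419 — 6 statements merged into one kernel-verified Lean document; each statement's English description precedes it below -/
import Mathlib

section
/- For every 1 ≤ i ≤ k and every N ≥ 2, the optimal locations satisfy ℓ_N(i) ∈ { ℓ_{N-1}(i), ℓ_{N-1}(i) + 1 }; equivalently, counting positions so that the total number of spaces is N, the optimal location for x_i among N spaces differs from that among N-1 spaces by at most one: a_{N,r} < x_i for every r ≤ ℓ_{N-1}(i) - 2 and a_{N,r} > x_i for every ℓ_{N-1}(i) + 1 ≤ r ≤ N - 1. -/
open Finset

/-- The recursively defined thresholds `a_{N,r}` of Derman–Lieberman–Ross: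
`a_{N,0} = -∞`, `a_{N,N} = +∞` (indeed `a_{N,r} = +∞` for `r ≥ N`), and for
`N ≥ 2`, `1 ≤ r ≤ N-1`,
`a_{N,r} = Σ_{j=1}^k p_j · min(max(x_j, a_{N-1,r-1}), a_{N-1,r})`
(the conventions `max(x,-∞) = x`, `min(x,+∞) = x` hold automatically in `EReal`). -/
noncomputable def aT (k : ℕ) (x p : ℕ → ℝ) : ℕ → ℕ → EReal
  | 0, _ => ⊥
  | N + 1, r =>
    if r = 0 then ⊥
    else if N + 1 ≤ r then ⊤
    else ∑ j ∈ Finset.Icc 1 k,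
      (p j : EReal) * min (max (x j : EReal) (aT k x p N (r - 1))) (aT k x p N r)

/-- `ℓ_n(i)`: the optimal location for placing the value `x_i` when `n` empty
spaces remain, i.e. the least `r ∈ {1,…,n}` with `x_i ≤ a_{n,r}`. -/
noncomputable def ell (k : ℕ) (x p : ℕ → ℝ) (n i : ℕ) : ℕ :=
  sInf {r : ℕ | 1 ≤ r ∧ r ≤ n ∧ (x i : EReal) ≤ aT k x p n r}

lemma aT_bot (k : ℕ) (x p : ℕ → ℝ) (N : ℕ) : aT k x p N 0 = ⊥ := by
  cases N <;> simp [aT]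

lemma aT_top (k : ℕ) (x p : ℕ → ℝ) {N t : ℕ} (h1 : 1 ≤ N) (h2 : N ≤ t) :
    aT k x p N t = ⊤ := by
  obtain ⟨M, rfl⟩ : ∃ M, N = M + 1 := ⟨N - 1, by omega⟩
  simp only [aT]
  rw [if_neg (by omega), if_pos (by omega)]

lemma aT_interior (k : ℕ) (x p : ℕ → ℝ) {N r : ℕ} (h1 : 1 ≤ r) (h2 : r ≤ N) :
    aT k x p (N+1) r = ∑ j ∈ Finset.Icc 1 k,
      (p j : EReal) * min (max (x j : EReal) (aT k x p N (r - 1))) (aT k x p N r) := by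
  simp only [aT]
  rw [if_neg (by omega), if_neg (by omega)]

lemma coe_sum' (s : Finset ℕ) (f : ℕ → ℝ) :
    ((∑ j ∈ s, f j : ℝ) : EReal) = ∑ j ∈ s, (f j : EReal) := by
  induction s using Finset.cons_induction with
  | empty => simp
  | cons a s ha ih => rw [Finset.sum_cons, Finset.sum_cons, EReal.coe_add, ih]

lemma repr_aux (k : ℕ) (x p : ℕ → ℝ) {N r : ℕ} (h1 : 1 ≤ r) (h2 : r ≤ N)
    (ha : aT k x p N (r-1) < (x k : EReal)) (hb : (x 1 : EReal) ≤ aT k x p N r) :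
    ∃ u : ℕ → ℝ,
      aT k x p (N+1) r = ((∑ j ∈ Icc 1 k, p j * u j : ℝ) : EReal) ∧
      (∀ j, (u j : EReal)
        = min (max (x j : EReal) (aT k x p N (r-1))) (aT k x p N r)) := by
  set a := aT k x p N (r-1) with hadef
  set b := aT k x p N r with hbdef
  have hm : ∀ j : ℕ, min (max (x j : EReal) a) b ≠ ⊥ ∧ min (max (x j : EReal) a) b ≠ ⊤ := by
    intro j
    constructor
    · have h1' : (⊥ : EReal) < min (x j : EReal) b :=
        lt_min (EReal.bot_lt_coe _) (lt_of_lt_of_le (EReal.bot_lt_coe (x 1)) hb)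
      have h2' : min (x j : EReal) b ≤ min (max (x j : EReal) a) b :=
        min_le_min (le_max_left _ _) le_rfl
      exact (lt_of_lt_of_le h1' h2').ne'
    · have h1' : min (max (x j : EReal) a) b ≤ max (x j : EReal) a := min_le_left _ _
      have h2' : max (x j : EReal) a < ⊤ :=
        max_lt (EReal.coe_lt_top _) (lt_trans ha (EReal.coe_lt_top _))
      exact (lt_of_le_of_lt h1' h2').ne
  refine ⟨fun j => (min (max (x j : EReal) a) b).toReal,
    ?_, fun j => EReal.coe_toReal (hm j).2 (hm j).1⟩
  rw [aT_interior k x p h1 h2, coe_sum']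
  refine Finset.sum_congr rfl fun j _ => ?_
  rw [EReal.coe_mul, EReal.coe_toReal (hm j).2 (hm j).1]

lemma aT_good (k : ℕ) (hk : 3 ≤ k) (x p : ℕ → ℝ)
    (hx : ∀ i j : ℕ, 1 ≤ i → i < j → j ≤ k → x i < x j)
    (hp : ∀ j : ℕ, 1 ≤ j → j ≤ k → 0 < p j)
    (hsum : ∑ j ∈ Finset.Icc 1 k, p j = 1) :
    ∀ N r : ℕ, 1 ≤ r → r + 1 ≤ N →
      ∃ c : ℝ, aT k x p N r = (c : EReal) ∧ x 1 ≤ c ∧ c < x k := by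
  have hxle : ∀ i j : ℕ, 1 ≤ i → i ≤ j → j ≤ k → x i ≤ x j := by
    intro i j hi hij hjk
    rcases lt_or_eq_of_le hij with h | h
    · exact (hx i j hi h hjk).le
    · rw [h]
  have hx1k : x 1 < x k := hx 1 k (by omega) (by omega) le_rfl
  intro N
  induction N with
  | zero => intro r h1 h2; omega
  | succ N ih =>
    intro r h1 h2
    have h2' : r ≤ N := by omega
    have ha : aT k x p N (r-1) < (x k : EReal) := by
      rcases Nat.eq_or_lt_of_le h1 with h | h
      · rw [← h]; simp only [Nat.sub_self]; rw [aT_bot]; exact EReal.bot_lt_coe _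
      · obtain ⟨c, hc, _, hc2⟩ := ih (r-1) (by omega) (by omega)
        rw [hc]; exact_mod_cast hc2
    have hb : (x 1 : EReal) ≤ aT k x p N r := by
      rcases Nat.eq_or_lt_of_le h2' with h | h
      · rw [aT_top k x p (by omega) (by omega)]; exact le_top
      · obtain ⟨c, hc, hc1, _⟩ := ih r h1 (by omega)
        rw [hc]; exact_mod_cast hc1
    obtain ⟨u, hrepr, hu⟩ := repr_aux k x p h1 h2' ha hb
    refine ⟨∑ j ∈ Icc 1 k, p j * u j, hrepr, ?_, ?_⟩
    · calc x 1 = ∑ j ∈ Icc 1 k, p j * x 1 := by rw [← Finset.sum_mul, hsum, one_mul]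
        _ ≤ ∑ j ∈ Icc 1 k, p j * u j := by
          refine Finset.sum_le_sum fun j hj => ?_
          rw [Finset.mem_Icc] at hj
          refine mul_le_mul_of_nonneg_left ?_ (hp j hj.1 hj.2).le
          have : (x 1 : EReal) ≤ (u j : EReal) := by
            rw [hu j]
            exact le_min (le_trans (by exact_mod_cast hxle 1 j (by omega) hj.1 hj.2)
              (le_max_left _ _)) hb
          exact_mod_cast this
    · have hlt : ∑ j ∈ Icc 1 k, p j * u j < ∑ j ∈ Icc 1 k, p j * x k := by
        refine Finset.sum_lt_sum (fun j hj => ?_) ⟨1, Finset.mem_Icc.2 ⟨le_rfl, by omega⟩, ?_⟩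
        · rw [Finset.mem_Icc] at hj
          refine mul_le_mul_of_nonneg_left ?_ (hp j hj.1 hj.2).le
          have : (u j : EReal) ≤ (x k : EReal) := by
            rw [hu j]
            exact le_trans (min_le_left _ _)
              (max_le (by exact_mod_cast hxle j k hj.1 hj.2 le_rfl) ha.le)
          exact_mod_cast this
        · refine mul_lt_mul_of_pos_left ?_ (hp 1 le_rfl (by omega))
          have : (u 1 : EReal) < (x k : EReal) := by
            rw [hu 1]
            exact lt_of_le_of_lt (min_le_left _ _)
              (max_lt (by exact_mod_cast hx1k) ha)
          exact_mod_cast this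
      calc ∑ j ∈ Icc 1 k, p j * u j < ∑ j ∈ Icc 1 k, p j * x k := hlt
        _ = x k := by rw [← Finset.sum_mul, hsum, one_mul]

section Main
variable (k : ℕ) (hk : 3 ≤ k) (x p : ℕ → ℝ)
    (hx : ∀ i j : ℕ, 1 ≤ i → i < j → j ≤ k → x i < x j)
    (hp : ∀ j : ℕ, 1 ≤ j → j ≤ k → 0 < p j)
    (hsum : ∑ j ∈ Finset.Icc 1 k, p j = 1)

include hk hx hp hsum

lemma aT_lt_xk : ∀ N t : ℕ, t + 1 ≤ N → aT k x p N t < (x k : EReal) := by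
  intro N t h
  rcases Nat.eq_zero_or_pos t with h0 | h0
  · rw [h0, aT_bot]; exact EReal.bot_lt_coe _
  · obtain ⟨c, hc, _, hc2⟩ := aT_good k hk x p hx hp hsum N t h0 h
    rw [hc]; exact_mod_cast hc2

lemma aT_lb : ∀ N t : ℕ, 1 ≤ t → 1 ≤ N → (x 1 : EReal) ≤ aT k x p N t := by
  intro N t h1 h2
  rcases le_or_gt N t with h | h
  · rw [aT_top k x p h2 h]; exact le_top
  · obtain ⟨c, hc, hc1, _⟩ := aT_good k hk x p hx hp hsum N t h1 (by omega)
    rw [hc]; exact_mod_cast hc1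

lemma aT_mono : ∀ N : ℕ, ∀ {r s : ℕ}, r ≤ s → aT k x p N r ≤ aT k x p N s := by
  intro N
  induction N with
  | zero => intro r s _; simp [aT]
  | succ N ih =>
    intro r s hrs
    rcases Nat.eq_zero_or_pos r with h0 | h0
    · rw [h0, aT_bot]; exact bot_le
    rcases le_or_gt (N+1) s with hs | hs
    · rw [aT_top k x p (by omega) hs]; exact le_top
    have hsN : s ≤ N := by omega
    have hrN : r ≤ N := by omega
    obtain ⟨u, hur, hu⟩ := repr_aux k x p h0 hrN
      (aT_lt_xk k hk x p hx hp hsum N (r-1) (by omega))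
      (aT_lb k hk x p hx hp hsum N r h0 (by omega))
    obtain ⟨v, hvr, hv⟩ := repr_aux k x p (by omega : 1 ≤ s) hsN
      (aT_lt_xk k hk x p hx hp hsum N (s-1) (by omega))
      (aT_lb k hk x p hx hp hsum N s (by omega) (by omega))
    rw [hur, hvr, EReal.coe_le_coe_iff]
    refine Finset.sum_le_sum fun j hj => ?_
    rw [Finset.mem_Icc] at hj
    refine mul_le_mul_of_nonneg_left ?_ (hp j hj.1 hj.2).le
    have : (u j : EReal) ≤ (v j : EReal) := by
      rw [hu j, hv j]
      exact min_le_min (max_le_max le_rfl (ih (by omega))) (ih hrs)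
    exact_mod_cast this

lemma aT_smono : ∀ N r : ℕ, 1 ≤ r → r + 2 ≤ N →
    aT k x p N r < aT k x p N (r+1) := by
  intro N
  induction N with
  | zero => intro r _ _; omega
  | succ N ih =>
    intro r h1 h2
    have hrN : r ≤ N := by omega
    have hr1N : r + 1 ≤ N := by omega
    obtain ⟨u, hur, hu⟩ := repr_aux k x p h1 hrN
      (aT_lt_xk k hk x p hx hp hsum N (r-1) (by omega))
      (aT_lb k hk x p hx hp hsum N r h1 (by omega))
    obtain ⟨v, hvr, hv⟩ := repr_aux k x p (by omega : 1 ≤ r+1) hr1N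
      (by simpa using aT_lt_xk k hk x p hx hp hsum N r (by omega))
      (aT_lb k hk x p hx hp hsum N (r+1) (by omega) (by omega))
    rw [hur, hvr, EReal.coe_lt_coe_iff]
    refine Finset.sum_lt_sum (fun j hj => ?_) ⟨k, Finset.mem_Icc.2 ⟨by omega, le_rfl⟩, ?_⟩
    · rw [Finset.mem_Icc] at hj
      refine mul_le_mul_of_nonneg_left ?_ (hp j hj.1 hj.2).le
      have : (u j : EReal) ≤ (v j : EReal) := by
        rw [hu j, hv j]
        simp only [Nat.add_sub_cancel]
        exact min_le_min
          (max_le_max le_rfl (aT_mono k hk x p hx hp hsum N (by omega)))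
          (aT_mono k hk x p hx hp hsum N (by omega))
      exact_mod_cast this
    · refine mul_lt_mul_of_pos_left ?_ (hp k (by omega) le_rfl)
      have hltk : aT k x p N r < (x k : EReal) :=
        aT_lt_xk k hk x p hx hp hsum N r (by omega)
      have hltk' : aT k x p N (r-1) < (x k : EReal) :=
        aT_lt_xk k hk x p hx hp hsum N (r-1) (by omega)
      have huk : (u k : EReal) = aT k x p N r := by
        rw [hu k, max_eq_left hltk'.le, min_eq_right hltk.le]
      have hvk : (v k : EReal) = min (x k : EReal) (aT k x p N (r+1)) := by
        rw [hv k]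
        simp only [Nat.add_sub_cancel]
        rw [max_eq_left hltk.le]
      have : (u k : EReal) < (v k : EReal) := by
        rw [huk, hvk]
        refine lt_min hltk ?_
        rcases le_or_gt N (r+1) with h | h
        · rw [aT_top k x p (by omega) h]
          exact lt_of_lt_of_le hltk le_top
        · exact ih r h1 (by omega)
      exact_mod_cast this



lemma sandwich_low : ∀ N r : ℕ, 1 ≤ r → r ≤ N →
    aT k x p N (r-1) ≤ aT k x p (N+1) r := by
  intro N r h1 h2
  rcases Nat.eq_or_lt_of_le h1 with h | h
  · rw [← h]; simp only [Nat.sub_self]; rw [aT_bot]; exact bot_le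
  obtain ⟨c, hc, _, _⟩ := aT_good k hk x p hx hp hsum N (r-1) (by omega) (by omega)
  obtain ⟨u, hrepr, hu⟩ := repr_aux k x p h1 h2
    (aT_lt_xk k hk x p hx hp hsum N (r-1) (by omega))
    (aT_lb k hk x p hx hp hsum N r h1 (by omega))
  rw [hrepr, hc, EReal.coe_le_coe_iff]
  calc c = ∑ j ∈ Icc 1 k, p j * c := by rw [← Finset.sum_mul, hsum, one_mul]
    _ ≤ ∑ j ∈ Icc 1 k, p j * u j := by
      refine Finset.sum_le_sum fun j hj => ?_
      rw [Finset.mem_Icc] at hj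
      refine mul_le_mul_of_nonneg_left ?_ (hp j hj.1 hj.2).le
      have : (c : EReal) ≤ (u j : EReal) := by
        rw [hu j, ← hc]
        exact le_min (le_max_right _ _) (aT_mono k hk x p hx hp hsum N (by omega))
      exact_mod_cast this

lemma sandwich_high : ∀ N r : ℕ, 1 ≤ r → r + 1 ≤ N →
    aT k x p (N+1) r ≤ aT k x p N r := by
  intro N r h1 h2
  obtain ⟨c, hc, _, _⟩ := aT_good k hk x p hx hp hsum N r h1 h2
  obtain ⟨u, hrepr, hu⟩ := repr_aux k x p h1 (by omega)
    (aT_lt_xk k hk x p hx hp hsum N (r-1) (by omega))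
    (aT_lb k hk x p hx hp hsum N r h1 (by omega))
  rw [hrepr, hc, EReal.coe_le_coe_iff]
  calc ∑ j ∈ Icc 1 k, p j * u j ≤ ∑ j ∈ Icc 1 k, p j * c := by
        refine Finset.sum_le_sum fun j hj => ?_
        rw [Finset.mem_Icc] at hj
        refine mul_le_mul_of_nonneg_left ?_ (hp j hj.1 hj.2).le
        have : (u j : EReal) ≤ (c : EReal) := by
          rw [hu j, ← hc]; exact min_le_right _ _
        exact_mod_cast this
    _ = c := by rw [← Finset.sum_mul, hsum, one_mul]

lemma strict_above : ∀ N r i : ℕ, 1 ≤ r → r ≤ N → 1 ≤ i → i < k →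
    aT k x p N (r-1) = (x i : EReal) → (x i : EReal) < aT k x p N r →
    (x i : EReal) < aT k x p (N+1) r := by
  intro N r i h1 h2 hi1 hik heq hbgt
  have hxik : x i < x k := hx i k hi1 hik le_rfl
  have hx1i : x 1 ≤ x i := by
    rcases Nat.eq_or_lt_of_le hi1 with h | h
    · rw [← h]
    · exact (hx 1 i le_rfl h (by omega)).le
  obtain ⟨u, hrepr, hu⟩ := repr_aux k x p h1 h2
    (by rw [heq]; exact_mod_cast hxik)
    (le_trans (by exact_mod_cast hx1i) hbgt.le)
  rw [hrepr, EReal.coe_lt_coe_iff]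
  calc x i = ∑ j ∈ Icc 1 k, p j * x i := by rw [← Finset.sum_mul, hsum, one_mul]
    _ < ∑ j ∈ Icc 1 k, p j * u j := by
      refine Finset.sum_lt_sum (fun j hj => ?_) ⟨k, Finset.mem_Icc.2 ⟨by omega, le_rfl⟩, ?_⟩
      · rw [Finset.mem_Icc] at hj
        refine mul_le_mul_of_nonneg_left ?_ (hp j hj.1 hj.2).le
        have : (x i : EReal) ≤ (u j : EReal) := by
          rw [hu j, heq]
          exact le_min (le_max_right _ _) hbgt.le
        exact_mod_cast this
      · refine mul_lt_mul_of_pos_left ?_ (hp k (by omega) le_rfl)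
        have : (x i : EReal) < (u k : EReal) := by
          rw [hu k, heq]
          exact lt_min (lt_of_lt_of_le (by exact_mod_cast hxik) (le_max_left _ _)) hbgt
        exact_mod_cast this

end Main


lemma ell_mem (k : ℕ) (x p : ℕ → ℝ) (n i : ℕ) (hn : 1 ≤ n) :
    1 ≤ ell k x p n i ∧ ell k x p n i ≤ n ∧
      (x i : EReal) ≤ aT k x p n (ell k x p n i) :=
  Nat.sInf_mem (s := {r : ℕ | 1 ≤ r ∧ r ≤ n ∧ (x i : EReal) ≤ aT k x p n r})
    ⟨n, hn, le_rfl, by rw [aT_top k x p hn le_rfl]; exact le_top⟩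

lemma ell_lt (k : ℕ) (x p : ℕ → ℝ) (n i r : ℕ) (h1 : 1 ≤ r) (h2 : r ≤ n)
    (h : r < ell k x p n i) : aT k x p n r < (x i : EReal) := by
  by_contra hcon
  rw [not_lt] at hcon
  have h' : ell k x p n i ≤ r := Nat.sInf_le ⟨h1, h2, hcon⟩
  omega


/-- For every `1 ≤ i ≤ k` and `N ≥ 2`,
`ℓ_N(i) ∈ {ℓ_{N-1}(i), ℓ_{N-1}(i) + 1}`; moreover `a_{N,r} < x_i` for every
`r ≤ ℓ_{N-1}(i) - 2`, and `a_{N,r} > x_i` for every `ℓ_{N-1}(i) + 1 ≤ r ≤ N - 1`. -/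
theorem ell_continuity (k : ℕ) (hk : 3 ≤ k) (x p : ℕ → ℝ)
    (hx : ∀ i j : ℕ, 1 ≤ i → i < j → j ≤ k → x i < x j)
    (hp : ∀ j : ℕ, 1 ≤ j → j ≤ k → 0 < p j)
    (hsum : ∑ j ∈ Finset.Icc 1 k, p j = 1) :
    ∀ i : ℕ, 1 ≤ i → i ≤ k → ∀ N : ℕ, 2 ≤ N →
      (ell k x p N i = ell k x p (N - 1) i ∨
        ell k x p N i = ell k x p (N - 1) i + 1) ∧
      (∀ r : ℕ, r ≤ ell k x p (N - 1) i - 2 → aT k x p N r < (x i : EReal)) ∧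
      (∀ r : ℕ, ell k x p (N - 1) i + 1 ≤ r → r ≤ N - 1 →
        (x i : EReal) < aT k x p N r) := by
  intro i hi1 hik N hN
  obtain ⟨M, rfl⟩ : ∃ M, N = M + 1 := ⟨N - 1, by omega⟩
  have hM : 1 ≤ M := by omega
  simp only [Nat.add_sub_cancel]
  set L := ell k x p M i with hLdef
  obtain ⟨hL1, hLM, hxL⟩ := ell_mem k x p M i hM
  refine ⟨?_, ?_, ?_⟩
  · -- part (a)
    set L' := ell k x p (M+1) i with hL'def
    obtain ⟨hL'1, hL'M, hxL'⟩ := ell_mem k x p (M+1) i (by omega)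
    have hLleL' : L ≤ L' := by
      by_contra hcon
      rw [not_le] at hcon
      have hlt : aT k x p (M+1) L' < (x i : EReal) :=
        lt_of_le_of_lt (sandwich_high k hk x p hx hp hsum M L' hL'1 (by omega))
          (ell_lt k x p M i L' hL'1 (by omega) hcon)
      exact absurd hxL' (not_le.2 hlt)
    have hL'le : L' ≤ L + 1 := by
      apply Nat.sInf_le
      refine ⟨by omega, by omega, ?_⟩
      rcases Nat.eq_or_lt_of_le hLM with h | h
      · rw [aT_top k x p (by omega) (by omega)]; exact le_top
      · refine le_trans hxL (le_trans ?_
          (sandwich_low k hk x p hx hp hsum M (L+1) (by omega) (by omega)))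
        simp only [Nat.add_sub_cancel]
        exact le_rfl
    omega
  · -- part (b)
    intro r hr
    rcases Nat.eq_zero_or_pos r with h0 | h0
    · rw [h0, aT_bot]; exact EReal.bot_lt_coe _
    · have hrL : r + 2 ≤ L := by omega
      exact lt_of_le_of_lt
        (sandwich_high k hk x p hx hp hsum M r h0 (by omega))
        (ell_lt k x p M i r h0 (by omega) (by omega))
  · -- part (c)
    intro r hr1 hr2
    have hge : (x i : EReal) ≤ aT k x p M (r-1) :=
      le_trans hxL (aT_mono k hk x p hx hp hsum M (by omega))
    have hlow : aT k x p M (r-1) ≤ aT k x p (M+1) r :=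
      sandwich_low k hk x p hx hp hsum M r (by omega) hr2
    rcases lt_or_eq_of_le hge with h | h
    · exact lt_of_lt_of_le h hlow
    · have hik' : i < k := by
        rcases Nat.eq_or_lt_of_le hik with hh | hh
        · exfalso
          have := aT_lt_xk k hk x p hx hp hsum M (r-1) (by omega)
          rw [← h, ← hh] at this
          exact lt_irrefl _ this
        · exact hh
      have hbgt : (x i : EReal) < aT k x p M r := by
        rcases Nat.eq_or_lt_of_le hr2 with hh | hh
        · rw [hh, aT_top k x p (by omega) le_rfl]; exact EReal.coe_lt_top _
        · have := aT_smono k hk x p hx hp hsum M (r-1) (by omega) (by omega)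
          rw [← h] at this
          simpa [Nat.sub_add_cancel (by omega : 1 ≤ r)] using this
      exact strict_above k hk x p hx hp hsum M r i (by omega) hr2 hi1 hik' h.symm hbgt
end

section
/- Let 0 < v < b < 1 and let ℓ : ℕ → ℕ be a function with 1 ≤ ℓ(n) ≤ n for all n ≥ 1, such that limsup_{n→∞} ℓ(n)/n > b. Then there are infinitely many positive integers N such that both: (i) ℓ(N) ≥ bN + 1; and (ii) ℓ(N - t) ≤ ℓ(N) - v·t for every integer 0 ≤ t ≤ N - 1. -/
open Filter

/-- Let `0 < v < b < 1` and let `ℓ : ℕ → ℕ` satisfy `1 ≤ ℓ(n) ≤ n`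
for all `n ≥ 1`, with `limsup ℓ(n)/n > b`.  Then there are infinitely many
positive integers `N` with (i) `ℓ(N) ≥ bN + 1`, and
(ii) `ℓ(N-t) ≤ ℓ(N) - v·t` for every integer `0 ≤ t ≤ N-1`. -/
theorem good_values_infinite (v b : ℝ) (hv : 0 < v) (hvb : v < b) (hb : b < 1)
    (ℓ : ℕ → ℕ) (hℓ : ∀ n : ℕ, 1 ≤ n → 1 ≤ ℓ n ∧ ℓ n ≤ n)
    (hlimsup : b < Filter.limsup (fun n : ℕ => (ℓ n : ℝ) / n) Filter.atTop) :
    {N : ℕ | 0 < N ∧ b * N + 1 ≤ (ℓ N : ℝ) ∧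
      ∀ t : ℕ, t ≤ N - 1 → (ℓ (N - t) : ℝ) ≤ (ℓ N : ℝ) - v * t}.Infinite := by
  by_contra hfin
  rw [Set.not_infinite] at hfin
  obtain ⟨M, hM⟩ := hfin.bddAbove
  -- pick b' strictly between b and the limsup
  obtain ⟨b', hbb', hb'lim⟩ := exists_between hlimsup
  have hcob : IsCoboundedUnder (· ≤ ·) atTop (fun n : ℕ => (ℓ n : ℝ) / n) :=
    isCoboundedUnder_le_of_le atTop (x := 0) (fun n => by positivity)
  have hfreq : ∃ᶠ n in atTop, b' < (ℓ n : ℝ) / n :=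
    frequently_lt_of_lt_limsup hcob hb'lim
  -- choose a large threshold
  obtain ⟨n0, hn0⟩ := exists_nat_ge (max (1 / (b' - b)) ((M + 1) / (b - v)))
  obtain ⟨n, hbn, hn⟩ := (hfreq.and_eventually (eventually_ge_atTop (max n0 1))).exists
  have hn1 : 1 ≤ n := le_trans (le_max_right _ _) hn
  have hnn0 : (n0 : ℝ) ≤ n := by exact_mod_cast le_trans (le_max_left _ _) hn
  have hnpos : (0 : ℝ) < n := by exact_mod_cast hn1
  have hb'b : 0 < b' - b := by linarith
  have hbv : 0 < b - v := by linarith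
  -- (b'-b) * n ≥ 1
  have h1 : (1 : ℝ) ≤ (b' - b) * n := by
    have h2 : 1 / (b' - b) ≤ (n : ℝ) := le_trans (le_trans (le_max_left _ _) hn0) hnn0
    rw [div_le_iff₀ hb'b] at h2
    nlinarith
  -- (b-v) * n ≥ M + 1
  have h3 : (M : ℝ) + 1 ≤ (b - v) * n := by
    have h2 : (M + 1) / (b - v) ≤ (n : ℝ) := le_trans (le_trans (le_max_right _ _) hn0) hnn0
    rw [div_le_iff₀ hbv] at h2
    linarith
  -- ℓ n ≥ b * n + 1
  have hℓn : b * n + 1 ≤ (ℓ n : ℝ) := by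
    rw [lt_div_iff₀ hnpos] at hbn
    nlinarith
  -- take a maximizer of m ↦ ℓ m - v m on [1, n]
  obtain ⟨N, hNmem, hNmax⟩ := Finset.exists_max_image (Finset.Icc 1 n)
    (fun m => (ℓ m : ℝ) - v * m) ⟨1, by simp [hn1]⟩
  rw [Finset.mem_Icc] at hNmem
  obtain ⟨hN1, hNn⟩ := hNmem
  have hkey : (ℓ n : ℝ) - v * n ≤ (ℓ N : ℝ) - v * N :=
    hNmax n (by rw [Finset.mem_Icc]; exact ⟨hn1, le_refl n⟩)
  have hNncast : (N : ℝ) ≤ n := by exact_mod_cast hNn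
  have hℓN : b * N + 1 ≤ (ℓ N : ℝ) := by nlinarith
  have hNS : N ∈ {N : ℕ | 0 < N ∧ b * N + 1 ≤ (ℓ N : ℝ) ∧
      ∀ t : ℕ, t ≤ N - 1 → (ℓ (N - t) : ℝ) ≤ (ℓ N : ℝ) - v * t} := by
    refine ⟨hN1, hℓN, fun t ht => ?_⟩
    have htN : t ≤ N := le_trans ht (Nat.sub_le N 1)
    have hm1 : 1 ≤ N - t := by omega
    have hmn : N - t ≤ n := le_trans (Nat.sub_le N t) hNn
    have hmax := hNmax (N - t) (by rw [Finset.mem_Icc]; exact ⟨hm1, hmn⟩)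
    have hcast : ((N - t : ℕ) : ℝ) = (N : ℝ) - t := by
      rw [Nat.cast_sub htN]
    simp only [hcast] at hmax
    linarith
  -- but N > M, contradicting N ≤ M
  have hNle := hM hNS
  have hℓNle : (ℓ N : ℝ) ≤ N := by exact_mod_cast (hℓ N hN1).2
  have hNcast : (N : ℝ) ≥ M + 1 := by
    have hvN : 0 ≤ v * N := by positivity
    nlinarith
  have : (M : ℝ) < N := by linarith
  exact absurd hNle (not_le.mpr (by exact_mod_cast this))
end

section
/- Let 0 < a < b < 1 and set d(a,b) = log((1-b)/(1-a)) / log( a(1-b) / ((1-a)b) ). Then a < d(a,b) < b. -/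
/-- `d(a,b) = log((1-b)/(1-a)) / log( a(1-b) / ((1-a)b) )`. -/
noncomputable def dOf (a b : ℝ) : ℝ :=
  Real.log ((1 - b) / (1 - a)) / Real.log (a * (1 - b) / ((1 - a) * b))

/-- Gibbs: for positive `x ≠ y`, `x - y < x * log (x/y)`. -/
lemma gibbs_aux {x y : ℝ} (hx : 0 < x) (hy : 0 < y) (hxy : x ≠ y) :
    x - y < x * Real.log (x / y) := by
  have h1 : Real.log (y / x) < y / x - 1 := by
    apply Real.log_lt_sub_one_of_pos (div_pos hy hx)
    intro h
    exact hxy ((div_eq_one_iff_eq hx.ne').mp h).symm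
  have h2 : Real.log (y / x) = - Real.log (x / y) := by
    rw [Real.log_div hy.ne' hx.ne', Real.log_div hx.ne' hy.ne']; ring
  rw [h2] at h1
  have := mul_lt_mul_of_pos_left h1 hx
  have hx' : x * (y / x - 1) = y - x := by field_simp
  nlinarith

/-- For `0 < a < b < 1` one has `a < d(a,b) < b`. -/
theorem dOf_mem_Ioo (a b : ℝ) (ha : 0 < a) (hab : a < b) (hb : b < 1) :
    a < dOf a b ∧ dOf a b < b := by
  have ha1 : 0 < 1 - a := by linarith
  have hb1 : 0 < 1 - b := by linarith
  have hb0 : 0 < b := lt_trans ha hab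
  -- log expansions
  have hL1 : Real.log ((1 - b) / (1 - a)) = Real.log (1 - b) - Real.log (1 - a) :=
    Real.log_div hb1.ne' ha1.ne'
  have hL2 : Real.log (a * (1 - b) / ((1 - a) * b))
      = Real.log a + Real.log (1 - b) - (Real.log (1 - a) + Real.log b) := by
    rw [Real.log_div (by positivity) (by positivity), Real.log_mul ha.ne' hb1.ne',
      Real.log_mul ha1.ne' hb0.ne']
  -- L2 < 0
  have hL2neg : Real.log (a * (1 - b) / ((1 - a) * b)) < 0 := by
    apply Real.log_neg (by positivity)
    rw [div_lt_one (by positivity)]; nlinarith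
  -- Gibbs inequalities
  have g1 : a - b < a * Real.log (a / b) := gibbs_aux ha hb0 hab.ne
  have g2 : (1 - a) - (1 - b) < (1 - a) * Real.log ((1 - a) / (1 - b)) :=
    gibbs_aux ha1 hb1 (by intro h; exact hab.ne (by linarith))
  have g3 : b - a < b * Real.log (b / a) := gibbs_aux hb0 ha hab.ne'
  have g4 : (1 - b) - (1 - a) < (1 - b) * Real.log ((1 - b) / (1 - a)) :=
    gibbs_aux hb1 ha1 (by intro h; exact hab.ne' (by linarith))
  rw [Real.log_div ha.ne' hb0.ne'] at g1
  rw [Real.log_div ha1.ne' hb1.ne'] at g2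
  rw [Real.log_div hb0.ne' ha.ne'] at g3
  rw [Real.log_div hb1.ne' ha1.ne'] at g4
  unfold dOf
  constructor
  · rw [lt_div_iff_of_neg hL2neg, hL1, hL2]
    nlinarith
  · rw [div_lt_iff_of_neg hL2neg, hL1, hL2]
    nlinarith
end

section
/- Let 0 < c < p < b < 1 and define g(x) = c + (b-c)/x for x ∈ ((b-c)/(1-c), 1], so that b ≤ g(x) < 1 on this interval. Then the function Φ(x) = -x·[ g(x) log(g(x)/p) + (1-g(x)) log((1-g(x))/(1-p)) ] is nondecreasing on ((b-c)/(1-c), 1]; in particular Φ(x) ≤ Φ(1) = -D(b‖p) for all x in this interval, where D(y‖p) = y log(y/p) + (1-y) log((1-y)/(1-p)). -/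
/-- Bernoulli relative entropy `D(y‖p)`. -/
noncomputable def relEnt (y p : ℝ) : ℝ :=
  y * Real.log (y / p) + (1 - y) * Real.log ((1 - y) / (1 - p))

lemma hasDerivAt_phi (c p b x : ℝ) (hc : 0 < c) (hcp : c < p) (hpb : p < b) (hb : b < 1)
    (hx0 : 0 < x) (hy1 : c + (b - c) / x < 1) :
    HasDerivAt (fun t => -(t * relEnt (c + (b - c) / t) p))
      (-(c * Real.log ((c + (b - c) / x) / p)
        + (1 - c) * Real.log ((1 - (c + (b - c) / x)) / (1 - p)))) x := by
  have hp : 0 < p := lt_trans hc hcp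
  have h1p : 0 < 1 - p := by linarith
  have hy0 : 0 < c + (b - c) / x := by
    have : 0 < (b - c) / x := div_pos (by linarith) hx0
    linarith
  have h1y : 0 < 1 - (c + (b - c) / x) := by linarith
  have hu : HasDerivAt (fun t => c + (b - c) / t) ((b - c) * (-(x ^ 2)⁻¹)) x := by
    have h := ((hasDerivAt_inv hx0.ne').const_mul (b - c)).const_add c
    simpa [div_eq_mul_inv] using h
  have h1 : HasDerivAt (fun t => Real.log ((c + (b - c) / t) / p))
      (((b - c) * (-(x ^ 2)⁻¹) / p) / ((c + (b - c) / x) / p)) x :=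
    (hu.div_const p).log (by positivity)
  have h2 : HasDerivAt (fun t => 1 - (c + (b - c) / t)) (-((b - c) * (-(x ^ 2)⁻¹))) x := by
    exact ((hasDerivAt_const x (1:ℝ)).sub hu).congr_deriv (by ring)
  have h3 : HasDerivAt (fun t => Real.log ((1 - (c + (b - c) / t)) / (1 - p)))
      ((-((b - c) * (-(x ^ 2)⁻¹)) / (1 - p)) / ((1 - (c + (b - c) / x)) / (1 - p))) x :=
    (h2.div_const (1 - p)).log (by positivity)
  have h6 : HasDerivAt (fun t => relEnt (c + (b - c) / t) p)
      (((b - c) * (-(x ^ 2)⁻¹)) * Real.log ((c + (b - c) / x) / p)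
        + (c + (b - c) / x) * (((b - c) * (-(x ^ 2)⁻¹) / p) / ((c + (b - c) / x) / p))
        + ((-((b - c) * (-(x ^ 2)⁻¹))) * Real.log ((1 - (c + (b - c) / x)) / (1 - p))
          + (1 - (c + (b - c) / x))
            * ((-((b - c) * (-(x ^ 2)⁻¹)) / (1 - p)) / ((1 - (c + (b - c) / x)) / (1 - p))))) x :=
    (hu.mul h1).add (h2.mul h3)
  have h7 : HasDerivAt (fun t => -(t * relEnt (c + (b - c) / t) p)) _ x := ((hasDerivAt_id' x).mul h6).neg
  convert h7 using 1
  show _ = -(1 * relEnt (c + (b - c) / x) p + _)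
  rw [show relEnt (c + (b - c) / x) p = (c + (b - c) / x) * Real.log ((c + (b - c) / x) / p)
      + (1 - (c + (b - c) / x)) * Real.log ((1 - (c + (b - c) / x)) / (1 - p)) from rfl]
  generalize Real.log ((c + (b - c) / x) / p) = L1
  generalize Real.log ((1 - (c + (b - c) / x)) / (1 - p)) = L2
  have hxne : x ≠ 0 := hx0.ne'
  have hmul : x * (c + (b - c) / x) = c * x + b - c := by field_simp; ring
  have hmul2 : x * (1 - (c + (b - c) / x)) = x - (c * x + b - c) := by field_simp; ring
  have hA : 0 < c * x + b - c := hmul ▸ mul_pos hx0 hy0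
  have hB : 0 < x - (c * x + b - c) := hmul2 ▸ mul_pos hx0 h1y
  have hyeq : c + (b - c) / x = (c * x + b - c) / x := by field_simp; ring
  rw [hyeq]
  field_simp [hA.ne', hB.ne']
  ring


lemma sign_key (c p y : ℝ) (hc : 0 < c) (hcp : c < p) (hpy : p ≤ y) (hy1 : y < 1) :
    c * Real.log (y / p) + (1 - c) * Real.log ((1 - y) / (1 - p)) ≤ 0 := by
  have hp : 0 < p := lt_trans hc hcp
  have h1p : 0 < 1 - p := by linarith
  have hy : 0 < y := lt_of_lt_of_le hp hpy
  have h1y : 0 < 1 - y := by linarith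
  have l1 : Real.log (y / p) ≤ y / p - 1 := Real.log_le_sub_one_of_pos (div_pos hy hp)
  have l2 : Real.log ((1 - y) / (1 - p)) ≤ (1 - y) / (1 - p) - 1 :=
    Real.log_le_sub_one_of_pos (div_pos h1y h1p)
  have hc1 : (0:ℝ) ≤ 1 - c := by linarith
  have hsum : c * (y / p - 1) + (1 - c) * ((1 - y) / (1 - p) - 1)
      = (y - p) * (c - p) / (p * (1 - p)) := by
    field_simp
    ring
  have hfin : (y - p) * (c - p) / (p * (1 - p)) ≤ 0 := by
    apply div_nonpos_of_nonpos_of_nonneg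
    · apply mul_nonpos_of_nonneg_of_nonpos <;> linarith
    · positivity
  nlinarith [mul_le_mul_of_nonneg_left l1 hc.le, mul_le_mul_of_nonneg_left l2 hc1]


/-- Let `0 < c < p < b < 1` and `g(x) = c + (b-c)/x` on the interval
`((b-c)/(1-c), 1]`, so that `b ≤ g(x) < 1` there.  Then
`Φ(x) = -x·D(g(x)‖p)` is nondecreasing on that interval; in particular
`Φ(x) ≤ Φ(1) = -D(b‖p)` for all `x` in the interval. -/
theorem phi_monotone (c p b : ℝ) (hc : 0 < c) (hcp : c < p) (hpb : p < b) (hb : b < 1)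
    (g : ℝ → ℝ) (hg : ∀ x, g x = c + (b - c) / x)
    (Φ : ℝ → ℝ) (hΦ : ∀ x, Φ x = -(x * relEnt (g x) p)) :
    (∀ x ∈ Set.Ioc ((b - c) / (1 - c)) (1 : ℝ), b ≤ g x ∧ g x < 1) ∧
    MonotoneOn Φ (Set.Ioc ((b - c) / (1 - c)) (1 : ℝ)) ∧
    Φ 1 = -relEnt b p ∧
    (∀ x ∈ Set.Ioc ((b - c) / (1 - c)) (1 : ℝ), Φ x ≤ -relEnt b p) := by
  have h1c : (0:ℝ) < 1 - c := by linarith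
  have ha0 : 0 < (b - c) / (1 - c) := div_pos (by linarith) h1c
  have ha1 : (b - c) / (1 - c) < 1 := (div_lt_one h1c).2 (by linarith)
  -- bounds on g
  have hbound : ∀ x ∈ Set.Ioc ((b - c) / (1 - c)) (1 : ℝ), b ≤ g x ∧ g x < 1 := by
    intro x hx
    have hx0 : 0 < x := lt_trans ha0 hx.1
    have hgx : g x = c + (b - c) / x := hg x
    constructor
    · rw [hgx]
      have : b - c ≤ (b - c) / x := (le_div_iff₀ hx0).2 (by nlinarith [hx.2])
      linarith
    · rw [hgx]
      have h1 : b - c < (1 - c) * x := by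
        have := (div_lt_iff₀ h1c).1 hx.1
        nlinarith
      have : (b - c) / x < 1 - c := (div_lt_iff₀ hx0).2 (by nlinarith)
      linarith
  -- Φ equals the explicit function
  have hΦeq : Φ = fun t => -(t * relEnt (c + (b - c) / t) p) := by
    funext t; rw [hΦ t, hg t]
  -- derivative at each point of the interval
  have hD : ∀ x ∈ Set.Ioc ((b - c) / (1 - c)) (1 : ℝ),
      HasDerivAt Φ (-(c * Real.log ((c + (b - c) / x) / p)
        + (1 - c) * Real.log ((1 - (c + (b - c) / x)) / (1 - p)))) x := by
    intro x hx
    have hx0 : 0 < x := lt_trans ha0 hx.1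
    have hy1 : c + (b - c) / x < 1 := by
      have := (hbound x hx).2; rwa [hg x] at this
    rw [hΦeq]
    exact hasDerivAt_phi c p b x hc hcp hpb hb hx0 hy1
  have hmono : MonotoneOn Φ (Set.Ioc ((b - c) / (1 - c)) (1 : ℝ)) := by
    have hconv : Convex ℝ (Set.Ioc ((b - c) / (1 - c)) (1 : ℝ)) := convex_Ioc _ _
    have hcont : ContinuousOn Φ (Set.Ioc ((b - c) / (1 - c)) (1 : ℝ)) :=
      fun x hx => (hD x hx).continuousAt.continuousWithinAt
    have hint : interior (Set.Ioc ((b - c) / (1 - c)) (1 : ℝ))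
        = Set.Ioo ((b - c) / (1 - c)) (1 : ℝ) := interior_Ioc
    apply monotoneOn_of_deriv_nonneg hconv hcont
    · rw [hint]
      intro x hx
      exact (hD x ⟨hx.1, hx.2.le⟩).differentiableAt.differentiableWithinAt
    · rw [hint]
      intro x hx
      have hx' : x ∈ Set.Ioc ((b - c) / (1 - c)) (1 : ℝ) := ⟨hx.1, hx.2.le⟩
      rw [(hD x hx').deriv]
      have hpy : p ≤ c + (b - c) / x := le_trans hpb.le ((hg x ▸ (hbound x hx').1))
      have hy1 : c + (b - c) / x < 1 := by
        have := (hbound x hx').2; rwa [hg x] at this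
      have := sign_key c p (c + (b - c) / x) hc hcp hpy hy1
      linarith
  have hΦ1 : Φ 1 = -relEnt b p := by
    rw [hΦ 1, hg 1]
    norm_num
  refine ⟨hbound, hmono, hΦ1, ?_⟩
  intro x hx
  have h1mem : (1:ℝ) ∈ Set.Ioc ((b - c) / (1 - c)) (1 : ℝ) := ⟨ha1, le_refl 1⟩
  calc Φ x ≤ Φ 1 := hmono hx h1mem hx.2
    _ = -relEnt b p := hΦ1
end

section
/- Let 0 < a < b < 1 and set d = d(a,b) = log((1-b)/(1-a)) / log( a(1-b) / ((1-a)b) ). Then for all b', b'' with d < b'' < b and d < b' < 1, one has D(b''‖b) < D(b'‖a), where D(y‖p) = y log(y/p) + (1-y) log((1-y)/(1-p)). -/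
open Real Set

lemma relEnt_pos {y p : ℝ} (hy0 : 0 < y) (hy1 : y < 1) (hp0 : 0 < p) (hp1 : p < 1)
    (hne : y ≠ p) : 0 < relEnt y p := by
  have h1 : Real.log (p / y) < p / y - 1 := by
    apply Real.log_lt_sub_one_of_pos (by positivity)
    intro h
    rw [div_eq_one_iff_eq hy0.ne'] at h
    exact hne h.symm
  have h2 : Real.log ((1 - p) / (1 - y)) < (1 - p) / (1 - y) - 1 := by
    apply Real.log_lt_sub_one_of_pos (div_pos (by linarith) (by linarith))
    intro h
    rw [div_eq_one_iff_eq (by linarith : (1:ℝ) - y ≠ 0)] at h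
    exact hne (by linarith)
  have e1 : Real.log (y / p) = - Real.log (p / y) := by
    rw [← Real.log_inv]; congr 1; rw [inv_div]
  have e2 : Real.log ((1 - y) / (1 - p)) = - Real.log ((1 - p) / (1 - y)) := by
    rw [← Real.log_inv]; congr 1; rw [inv_div]
  have c1 : y * (p / y - 1) = p - y := by field_simp
  have c2 : (1 - y) * ((1 - p) / (1 - y) - 1) = y - p := by field_simp [show (1:ℝ)-y ≠ 0 by linarith]; ring
  have m1 : y * Real.log (p / y) < p - y := by nlinarith
  have m2 : (1 - y) * Real.log ((1 - p) / (1 - y)) < y - p := by nlinarith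
  unfold relEnt
  rw [e1, e2]
  nlinarith

lemma logL_neg {a b : ℝ} (ha : 0 < a) (hab : a < b) (hb : b < 1) :
    Real.log (a * (1 - b) / ((1 - a) * b)) < 0 := by
  have hpos : (0:ℝ) < a * (1 - b) / ((1 - a) * b) :=
    div_pos (mul_pos ha (by linarith)) (mul_pos (by linarith) (by linarith))
  apply Real.log_neg hpos
  rw [div_lt_one (mul_pos (by linarith) (by linarith))]
  nlinarith

lemma logL_eq {a b : ℝ} (ha : 0 < a) (hab : a < b) (hb : b < 1) :
    Real.log (a * (1 - b) / ((1 - a) * b)) =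
      Real.log a + Real.log (1 - b) - Real.log (1 - a) - Real.log b := by
  rw [Real.log_div (by nlinarith) (by nlinarith),
      Real.log_mul ha.ne' (by linarith : (1:ℝ) - b ≠ 0),
      Real.log_mul (by linarith : (1:ℝ) - a ≠ 0) (by linarith : b ≠ 0)]
  ring

lemma logM_eq {a b : ℝ} (ha : 0 < a) (hab : a < b) (hb : b < 1) :
    Real.log ((1 - b) / (1 - a)) = Real.log (1 - b) - Real.log (1 - a) :=
  Real.log_div (by linarith) (by linarith)

lemma dOf_lt {a b : ℝ} (ha : 0 < a) (hab : a < b) (hb : b < 1) :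
    a < dOf a b ∧ dOf a b < b := by
  have hL := logL_neg ha hab hb
  have hLe := logL_eq ha hab hb
  have hMe := logM_eq ha hab hb
  have hDba := relEnt_pos (by linarith) hb ha (by linarith) (by linarith : b ≠ a)
  have hDab := relEnt_pos ha (by linarith) (by linarith) hb (by linarith : a ≠ b)
  have eba : relEnt b a = b * (Real.log b - Real.log a)
      + (1 - b) * (Real.log (1 - b) - Real.log (1 - a)) := by
    unfold relEnt
    rw [Real.log_div (by linarith) ha.ne', Real.log_div (by linarith) (by linarith)]
  have eab : relEnt a b = a * (Real.log a - Real.log b)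
      + (1 - a) * (Real.log (1 - a) - Real.log (1 - b)) := by
    unfold relEnt
    rw [Real.log_div ha.ne' (by linarith), Real.log_div (by linarith) (by linarith)]
  constructor
  · rw [dOf, lt_div_iff_of_neg hL]
    nlinarith
  · rw [dOf, div_lt_iff_of_neg hL]
    nlinarith

lemma relEnt_dOf_eq {a b : ℝ} (ha : 0 < a) (hab : a < b) (hb : b < 1) :
    relEnt (dOf a b) b = relEnt (dOf a b) a := by
  obtain ⟨hd1, hd2⟩ := dOf_lt ha hab hb
  set d := dOf a b with hd
  have hd0 : 0 < d := lt_trans ha hd1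
  have hd1' : d < 1 := lt_trans hd2 hb
  have hL := logL_neg ha hab hb
  have hLe := logL_eq ha hab hb
  have hMe := logM_eq ha hab hb
  have hdL : d * Real.log (a * (1 - b) / ((1 - a) * b)) = Real.log ((1 - b) / (1 - a)) := by
    rw [hd, dOf, div_mul_cancel₀ _ hL.ne]
  unfold relEnt
  rw [Real.log_div hd0.ne' (by linarith), Real.log_div hd0.ne' ha.ne',
      Real.log_div (by linarith) (by linarith), Real.log_div (by linarith) (by linarith)]
  rw [hLe, hMe] at hdL
  nlinarith

lemma hasDerivAt_relEnt {p : ℝ} (hp0 : 0 < p) (hp1 : p < 1) {y : ℝ} (hy0 : 0 < y)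
    (hy1 : y < 1) :
    HasDerivAt (fun x => relEnt x p)
      (Real.log (y / p) - Real.log ((1 - y) / (1 - p))) y := by
  have h1 : HasDerivAt (fun x : ℝ => x * Real.log x) (Real.log y + 1) y :=
    Real.hasDerivAt_mul_log hy0.ne'
  have h2 : HasDerivAt (fun x : ℝ => (1 - x) * Real.log (1 - x))
      (-(Real.log (1 - y) + 1)) y := by
    have := (Real.hasDerivAt_mul_log (x := 1 - y) (by linarith)).comp y
      ((hasDerivAt_id y).const_sub 1)
    exact this.congr_deriv (by ring)
  have h3 : HasDerivAt (fun x : ℝ => x * Real.log p) (Real.log p) y := by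
    simpa using (hasDerivAt_id y).mul_const (Real.log p)
  have h4 : HasDerivAt (fun x : ℝ => (1 - x) * Real.log (1 - p)) (-Real.log (1 - p)) y := by
    have := ((hasDerivAt_id y).const_sub 1).mul_const (Real.log (1 - p))
    simpa using this
  have hg : HasDerivAt (fun x : ℝ => x * Real.log x - x * Real.log p
      + ((1 - x) * Real.log (1 - x) - (1 - x) * Real.log (1 - p)))
      ((Real.log y + 1) - Real.log p + ((-(Real.log (1 - y) + 1)) - (-Real.log (1 - p)))) y :=
    (h1.sub h3).add (h2.sub h4)
  have heq : (fun x : ℝ => relEnt x p) =ᶠ[nhds y]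
      (fun x : ℝ => x * Real.log x - x * Real.log p
      + ((1 - x) * Real.log (1 - x) - (1 - x) * Real.log (1 - p))) := by
    filter_upwards [Ioo_mem_nhds hy0 hy1] with x hx
    unfold relEnt
    rw [Real.log_div (ne_of_gt hx.1) hp0.ne',
        Real.log_div (by linarith [hx.2] : (1:ℝ) - x ≠ 0) (by linarith : (1:ℝ) - p ≠ 0)]
    ring
  have := hg.congr_of_eventuallyEq heq
  refine this.congr_deriv ?_
  rw [Real.log_div hy0.ne' hp0.ne', Real.log_div (by linarith) (by linarith)]
  ring

/-- For `0 < a < b < 1`, writing `d = d(a,b)`, for all `b'`, `b''`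
with `d < b'' < b` and `d < b' < 1` one has `D(b''‖b) < D(b'‖a)`. -/
theorem relEnt_lt_relEnt (a b : ℝ) (ha : 0 < a) (hab : a < b) (hb : b < 1) :
    ∀ b' b'' : ℝ, dOf a b < b'' → b'' < b → dOf a b < b' → b' < 1 →
      relEnt b'' b < relEnt b' a := by
  obtain ⟨hd1, hd2⟩ := dOf_lt ha hab hb
  set d := dOf a b with hd
  have hd0 : 0 < d := lt_trans ha hd1
  intro b' b'' hdb'' hb''b hdb' hb'1
  have hanti : StrictAntiOn (fun y => relEnt y b) (Icc d b) := by
    apply strictAntiOn_of_deriv_neg (convex_Icc d b)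
    · intro y hy
      exact (hasDerivAt_relEnt (by linarith) hb (lt_of_lt_of_le hd0 hy.1)
        (lt_of_le_of_lt hy.2 hb)).continuousAt.continuousWithinAt
    · intro y hy
      rw [interior_Icc] at hy
      have hy0 : 0 < y := lt_trans hd0 hy.1
      have hy1 : y < 1 := lt_trans hy.2 hb
      rw [(hasDerivAt_relEnt (by linarith) hb hy0 hy1).deriv]
      have l1 : Real.log (y / b) < 0 :=
        Real.log_neg (div_pos hy0 (by linarith)) ((div_lt_one (by linarith)).2 hy.2)
      have l2 : 0 < Real.log ((1 - y) / (1 - b)) :=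
        Real.log_pos ((one_lt_div (by linarith)).2 (by linarith [hy.2]))
      linarith
  have hmono : StrictMonoOn (fun y => relEnt y a) (Icc d b') := by
    apply strictMonoOn_of_deriv_pos (convex_Icc d b')
    · intro y hy
      exact (hasDerivAt_relEnt ha (by linarith) (lt_of_lt_of_le hd0 hy.1)
        (lt_of_le_of_lt hy.2 hb'1)).continuousAt.continuousWithinAt
    · intro y hy
      rw [interior_Icc] at hy
      have hy0 : 0 < y := lt_trans hd0 hy.1
      have hy1 : y < 1 := lt_trans hy.2 hb'1
      rw [(hasDerivAt_relEnt ha (by linarith) hy0 hy1).deriv]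
      have l1 : 0 < Real.log (y / a) :=
        Real.log_pos ((one_lt_div ha).2 (lt_trans hd1 hy.1))
      have l2 : Real.log ((1 - y) / (1 - a)) < 0 := by
        apply Real.log_neg (div_pos (by linarith) (by linarith))
        rw [div_lt_one (by linarith)]
        linarith [lt_trans hd1 hy.1]
      linarith
  have h1 : relEnt b'' b < relEnt d b :=
    hanti ⟨le_refl d, hd2.le⟩ ⟨hdb''.le, hb''b.le⟩ hdb''
  have h2 : relEnt d a < relEnt b' a :=
    hmono ⟨le_refl d, hdb'.le⟩ ⟨hdb'.le, le_refl b'⟩ hdb'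
  have h3 := relEnt_dOf_eq ha hab hb
  rw [← hd] at h3
  linarith
end

section
/- Let 0 < β < v < 1. Then there exist a positive integer A and a positive integer n_0 such that for every n ≥ n_0, setting m = ⌊βn⌋ and letting (ξ_1, ..., ξ_n) be uniformly distributed over all 0-1 sequences of length n with exactly m ones, one has P[ there exists 1 ≤ t ≤ n with Σ_{s=1}^t ξ_s ≥ A + v·t ] ≤ 1/2. -/
open Finset

attribute [local instance] Classical.propDecidable

/-- Partial sum `Σ_{s=1}^t ξ_s` of a 0-1 sequence `ξ : Fin n → Bool`
(position `s : Fin n` represents `ξ_{s+1}`). -/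
def partialOnes {n : ℕ} (ξ : Fin n → Bool) (t : ℕ) : ℕ :=
  ∑ s ∈ Finset.univ.filter (fun s : Fin n => (s : ℕ) < t), (if ξ s then 1 else 0)

lemma partialOnes_eq_card {n : ℕ} (ξ : Fin n → Bool) (t : ℕ) :
    partialOnes ξ t = (univ.filter fun s : Fin n => (s : ℕ) < t ∧ ξ s = true).card := by
  unfold partialOnes
  rw [Finset.sum_boole, Finset.filter_filter]
  simp

lemma partialOnes_top {n : ℕ} (ξ : Fin n → Bool) :
    partialOnes ξ n = (univ.filter fun s : Fin n => ξ s = true).card := by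
  rw [partialOnes_eq_card]
  congr 1
  apply Finset.filter_congr
  intro s _
  simp [s.isLt]

lemma partialOnes_mono {n : ℕ} (ξ : Fin n → Bool) {t₁ t₂ : ℕ} (h : t₁ ≤ t₂) :
    partialOnes ξ t₁ ≤ partialOnes ξ t₂ := by
  unfold partialOnes
  apply Finset.sum_le_sum_of_subset
  exact Finset.monotone_filter_right univ fun s _ hs => lt_of_lt_of_le hs h

lemma card_val_lt {n t : ℕ} (ht : t ≤ n) :
    (univ.filter fun s : Fin n => (s : ℕ) < t).card = t := by
  have h := Finset.card_bij (s := univ.filter fun s : Fin n => (s : ℕ) < t)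
    (t := Finset.range t) (fun (s : Fin n) _ => (s : ℕ)) ?_ ?_ ?_
  · simpa using h
  · intro a ha
    simp only [mem_filter] at ha
    exact Finset.mem_range.mpr ha.2
  · intro a _ b _ hab
    exact Fin.val_injective hab
  · intro b hb
    exact ⟨⟨b, lt_of_lt_of_le (Finset.mem_range.mp hb) ht⟩,
      Finset.mem_filter.mpr ⟨mem_univ _, Finset.mem_range.mp hb⟩, rfl⟩

lemma card_val_not_lt {n t : ℕ} (ht : t ≤ n) :
    (univ.filter fun s : Fin n => ¬ (s : ℕ) < t).card = n - t := by
  have h := Finset.card_filter_add_card_filter_not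
    (s := (univ : Finset (Fin n))) (p := fun s : Fin n => (s : ℕ) < t)
  rw [card_val_lt ht] at h
  simp only [Finset.card_univ, Fintype.card_fin] at h
  omega

lemma card_F_le {n t j M : ℕ} (ht : t ≤ n) :
    (univ.filter fun ξ : Fin n → Bool =>
        partialOnes ξ n = M ∧ partialOnes ξ t = j).card
      ≤ t.choose j * (n - t).choose (M - j) := by
  have key := Finset.card_le_card_of_injOn
    (s := univ.filter fun ξ : Fin n → Bool => partialOnes ξ n = M ∧ partialOnes ξ t = j)
    (t := ((univ.filter fun s : Fin n => (s : ℕ) < t).powersetCard j) ×ˢ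
          ((univ.filter fun s : Fin n => ¬ (s : ℕ) < t).powersetCard (M - j)))
    (fun ξ : Fin n → Bool =>
      (univ.filter fun s : Fin n => (s : ℕ) < t ∧ ξ s = true,
       univ.filter fun s : Fin n => ¬ (s : ℕ) < t ∧ ξ s = true))
    ?_ ?_
  · calc _ ≤ _ := key
      _ = t.choose j * (n - t).choose (M - j) := by
        rw [Finset.card_product, Finset.card_powersetCard, Finset.card_powersetCard,
          card_val_lt ht, card_val_not_lt ht]
  · -- maps to
    intro ξ hξ
    simp only [mem_coe, mem_filter, mem_univ, true_and] at hξ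
    obtain ⟨hM, hj⟩ := hξ
    have hcard1 : (univ.filter fun s : Fin n => (s : ℕ) < t ∧ ξ s = true).card = j := by
      rw [← partialOnes_eq_card, hj]
    have htot : (univ.filter fun s : Fin n => ξ s = true).card = M := by
      rw [← partialOnes_top, hM]
    have hsplit := Finset.card_filter_add_card_filter_not
      (s := univ.filter fun s : Fin n => ξ s = true) (p := fun s : Fin n => (s : ℕ) < t)
    rw [Finset.filter_filter, Finset.filter_filter, htot] at hsplit
    have e1 : (univ.filter fun s : Fin n => ξ s = true ∧ (s : ℕ) < t)
        = univ.filter fun s : Fin n => (s : ℕ) < t ∧ ξ s = true := by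
      apply Finset.filter_congr; intro s _; exact and_comm
    have e2 : (univ.filter fun s : Fin n => ξ s = true ∧ ¬ (s : ℕ) < t)
        = univ.filter fun s : Fin n => ¬ (s : ℕ) < t ∧ ξ s = true := by
      apply Finset.filter_congr; intro s _; exact and_comm
    rw [e1, e2, hcard1] at hsplit
    apply Finset.mem_product.mpr
    constructor
    · apply Finset.mem_powersetCard.mpr
      exact ⟨Finset.monotone_filter_right univ fun s _ hs => hs.1, hcard1⟩
    · apply Finset.mem_powersetCard.mpr
      exact ⟨Finset.monotone_filter_right univ fun s _ hs => hs.1,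
        Nat.eq_sub_of_add_eq' hsplit⟩
  · -- injective
    intro ξ₁ h₁ ξ₂ h₂ heq
    have h1 := congrArg Prod.fst heq
    have h2 := congrArg Prod.snd heq
    simp only at h1 h2
    rw [Finset.ext_iff] at h1 h2
    funext s
    by_cases hs : (s : ℕ) < t
    · have := h1 s
      simp only [mem_filter, mem_univ, true_and, hs, true_and] at this
      cases hb1 : ξ₁ s <;> cases hb2 : ξ₂ s <;> simp_all
    · have := h2 s
      simp only [mem_filter, mem_univ, true_and, hs, not_false_iff, true_and] at this
      cases hb1 : ξ₁ s <;> cases hb2 : ξ₂ s <;> simp_all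

lemma choose_step_identity (t N M j : ℕ) (hj : j < M) :
    t.choose (j+1) * N.choose (M - (j+1)) * ((j+1) * (N - (M - j - 1)))
      = t.choose j * N.choose (M - j) * ((t - j) * (M - j)) := by
  obtain ⟨K, hK⟩ : ∃ K, M - j = K + 1 := ⟨M - j - 1, by omega⟩
  have h1 : M - (j+1) = K := by omega
  have h2 : M - j - 1 = K := by omega
  rw [h1, h2, hK]
  have e1 := Nat.choose_succ_right_eq t j
  have e2 := Nat.choose_succ_right_eq N K
  calc t.choose (j+1) * N.choose K * ((j+1) * (N - K))
      = (t.choose (j+1) * (j+1)) * (N.choose K * (N - K)) := by ring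
    _ = (t.choose j * (t - j)) * (N.choose (K+1) * (K+1)) := by rw [e1, ← e2]
    _ = t.choose j * N.choose (K+1) * ((t - j) * (K+1)) := by ring

lemma step_real {β u : ℝ} (hβ : 0 < β) (hβu : β < u) (hu : u < 1)
    {N M T J : ℝ} (hM : M ≤ β * N) (hT : T ≤ N) (h0T : 0 ≤ T)
    (huT : u * T ≤ J) (hJM : J + 1 ≤ M) (hN : 1 ≤ N) :
    (T - J) * (M - J) ≤ ((1-u)*β/(u*(1-β))) * ((J + 1) * (N - T - M + J + 1)) := by
  have hu0 : 0 < u := hβ.trans hβu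
  have h1u : 0 < 1 - u := by linarith
  have h1β : 0 < 1 - β := by linarith
  have hJpos : 0 ≤ J := le_trans (by positivity) huT
  have hD' : 0 ≤ N - M - (1-u)*T := by
    nlinarith [mul_le_mul_of_nonneg_left hT h1u.le, mul_nonneg (by linarith : (0:ℝ) ≤ u - β) (by linarith : (0:ℝ) ≤ N)]
  have hMuT : 0 < M - u*T := by linarith
  have h2 : (1-β)*(M - u*T) ≤ β*(N - M - (1-u)*T) := by
    nlinarith [mul_nonneg (by linarith : (0:ℝ) ≤ u - β) h0T]
  have hq : 0 ≤ (1-u)*β/(u*(1-β)) := by positivity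
  have key : (1-u)*T*(M - u*T) ≤ ((1-u)*β/(u*(1-β))) * ((u*T) * (N - M - (1-u)*T)) := by
    rw [div_mul_eq_mul_div, le_div_iff₀ (by positivity)]
    nlinarith [mul_le_mul_of_nonneg_left h2 (mul_nonneg (mul_nonneg h1u.le hu0.le) h0T)]
  calc (T - J)*(M - J) ≤ ((1-u)*T)*(M - u*T) := by
        apply mul_le_mul (by linarith) (by linarith) (by linarith) (by positivity)
    _ ≤ ((1-u)*β/(u*(1-β))) * ((u*T) * (N - M - (1-u)*T)) := key
    _ ≤ ((1-u)*β/(u*(1-β))) * ((J + 1) * (N - T - M + J + 1)) := by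
        apply mul_le_mul_of_nonneg_left ?_ hq
        apply mul_le_mul (by linarith) (by linarith) hD' (by linarith)

lemma f_step {β u : ℝ} (hβ : 0 < β) (hβu : β < u) (hu : u < 1)
    {n m t j : ℕ} (hm : (m:ℝ) ≤ β * n) (ht : t ≤ n) (hn : 1 ≤ n)
    (huT : u * t ≤ (j:ℝ)) (hjm : j < m) :
    (t.choose (j+1) * (n-t).choose (m - (j+1)) : ℝ)
      ≤ ((1-u)*β/(u*(1-β))) * (t.choose j * (n-t).choose (m - j)) := by
  have hu0 : 0 < u := hβ.trans hβu
  have h1u : 0 < 1 - u := by linarith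
  have h1β : 0 < 1 - β := by linarith
  have hq : 0 ≤ (1-u)*β/(u*(1-β)) := by positivity
  by_cases hjt : t ≤ j
  · have hz : t.choose (j+1) = 0 := Nat.choose_eq_zero_of_lt (by omega)
    rw [hz]
    push_cast
    rw [zero_mul]
    positivity
  push_neg at hjt
  have hmtnj : m + t ≤ n + j := by
    have h1 : (1-u)*(t:ℝ) ≤ (1-u)*n := by
      apply mul_le_mul_of_nonneg_left (Nat.cast_le.mpr ht) (by linarith)
    have h2 : (0:ℝ) ≤ (u-β)*n := mul_nonneg (by linarith) (Nat.cast_nonneg n)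
    have hr : (m:ℝ) + t ≤ n + j := by nlinarith
    exact_mod_cast hr
  have hsub : m - j - 1 < n - t := by omega
  have hDpos : (0:ℝ) < (((j+1) * ((n-t) - (m - j - 1)) : ℕ) : ℝ) := by
    have : 0 < (j+1) * ((n-t) - (m - j - 1)) := Nat.mul_pos (by omega) (by omega)
    exact_mod_cast this
  rw [← mul_le_mul_iff_of_pos_right hDpos]
  have hid := choose_step_identity t (n-t) m j hjm
  have hcast : (t.choose (j+1) * (n-t).choose (m - (j+1)) : ℝ) * (((j+1) * ((n-t) - (m - j - 1)) : ℕ) : ℝ)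
      = (t.choose j * (n-t).choose (m - j) : ℝ) * (((t - j) * (m - j) : ℕ) : ℝ) := by
    exact_mod_cast congrArg (Nat.cast (R := ℝ)) hid
  rw [hcast]
  have main : (((t - j) * (m - j) : ℕ) : ℝ)
      ≤ ((1-u)*β/(u*(1-β))) * (((j+1) * ((n-t) - (m - j - 1)) : ℕ) : ℝ) := by
    have c1 : (((t - j) * (m - j) : ℕ) : ℝ) = ((t:ℝ) - j) * ((m:ℝ) - j) := by
      push_cast [Nat.cast_sub hjt.le, Nat.cast_sub hjm.le]
      ring
    have c2 : ((((j+1) * ((n-t) - (m - j - 1)) : ℕ)) : ℝ)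
        = ((j:ℝ) + 1) * ((n:ℝ) - t - m + j + 1) := by
      have hs1 : m - j - 1 ≤ n - t := by omega
      have hs2 : t ≤ n := ht
      have hs3 : j + 1 ≤ m := hjm
      have hmj1 : ((m - j - 1 : ℕ) : ℝ) = (m:ℝ) - j - 1 := by
        rw [Nat.sub_sub, Nat.cast_sub (by omega : j + 1 ≤ m)]
        push_cast; ring
      rw [Nat.cast_mul, Nat.cast_sub hs1, hmj1, Nat.cast_sub hs2]
      push_cast; ring
    rw [c1, c2]
    apply step_real hβ hβu hu hm (Nat.cast_le.mpr ht) (Nat.cast_nonneg t) huT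
    · exact_mod_cast hjm
    · exact_mod_cast hn
  calc (t.choose j * (n-t).choose (m - j) : ℝ) * (((t - j) * (m - j) : ℕ) : ℝ)
      ≤ (t.choose j * (n-t).choose (m - j) : ℝ) * (((1-u)*β/(u*(1-β))) * (((j+1) * ((n-t) - (m - j - 1)) : ℕ) : ℝ)) := by
        apply mul_le_mul_of_nonneg_left main (by positivity)
    _ = ((1-u)*β/(u*(1-β))) * (t.choose j * (n-t).choose (m - j) : ℝ) * (((j+1) * ((n-t) - (m - j - 1)) : ℕ) : ℝ) := by ring

lemma f_base {n m t j : ℕ} (ht : t ≤ n) (hjm : j ≤ m) :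
    t.choose j * (n - t).choose (m - j) ≤ n.choose m := by
  have hvdm : n.choose m = ∑ ij ∈ Finset.HasAntidiagonal.antidiagonal m, t.choose ij.1 * (n-t).choose ij.2 := by
    conv_lhs => rw [← Nat.add_sub_cancel' ht]
    exact Nat.add_choose_eq t (n-t) m
  rw [hvdm]
  exact Finset.single_le_sum (f := fun ij : ℕ × ℕ => t.choose ij.1 * (n-t).choose ij.2)
    (fun i _ => Nat.zero_le _)
    (a := (j, m - j))
    (Finset.HasAntidiagonal.mem_antidiagonal.mpr (by omega : j + (m - j) = m))

lemma f_chain {β u : ℝ} (hβ : 0 < β) (hβu : β < u) (hu : u < 1)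
    {n m t : ℕ} (hm : (m:ℝ) ≤ β * n) (ht : t ≤ n) (hn : 1 ≤ n) :
    ∀ d j, j = ⌈u * t⌉₊ + d → j ≤ m →
      (t.choose j * (n-t).choose (m - j) : ℝ)
        ≤ ((1-u)*β/(u*(1-β)))^d * (n.choose m) := by
  have hu0 : 0 < u := hβ.trans hβu
  have h1u : 0 < 1 - u := by linarith
  have h1β : 0 < 1 - β := by linarith
  have hq : 0 ≤ (1-u)*β/(u*(1-β)) := by positivity
  intro d
  induction d with
  | zero =>
    intro j hj hjm
    rw [pow_zero, one_mul]
    exact_mod_cast f_base ht hjm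
  | succ d ih =>
    intro j hj hjm
    have hj' : j = (⌈u * t⌉₊ + d) + 1 := by omega
    subst hj'
    have hstep := f_step hβ hβu hu hm ht hn
      (j := ⌈u * t⌉₊ + d)
      (by
        have := Nat.le_ceil (u * (t:ℝ))
        have h2 : ((⌈u * t⌉₊ : ℕ) : ℝ) ≤ ((⌈u * t⌉₊ + d : ℕ) : ℝ) := by
          exact_mod_cast Nat.le_add_right _ _
        calc u * (t:ℝ) ≤ (⌈u * t⌉₊ : ℝ) := this
          _ ≤ _ := h2)
      (by omega)
    calc (t.choose (⌈u * t⌉₊ + d + 1) * (n-t).choose (m - (⌈u * t⌉₊ + d + 1)) : ℝ)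
        ≤ ((1-u)*β/(u*(1-β))) * (t.choose (⌈u * t⌉₊ + d) * (n-t).choose (m - (⌈u * t⌉₊ + d))) := hstep
      _ ≤ ((1-u)*β/(u*(1-β))) * (((1-u)*β/(u*(1-β)))^d * (n.choose m)) := by
          apply mul_le_mul_of_nonneg_left (ih _ rfl (by omega)) hq
      _ = ((1-u)*β/(u*(1-β)))^(d+1) * (n.choose m) := by ring

lemma geom_sum_le_inv {θ : ℝ} (h0 : 0 ≤ θ) (h1 : θ < 1) (N : ℕ) :
    ∑ i ∈ Finset.range N, θ^i ≤ 1/(1-θ) := by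
  rw [geom_sum_eq (by linarith : θ ≠ 1)]
  have heq : (θ^N - 1)/(θ - 1) = (1 - θ^N)/(1-θ) := by
    rw [← neg_div_neg_eq]; ring_nf
  rw [heq]
  have hp : (0:ℝ) ≤ θ^N := pow_nonneg h0 N
  apply div_le_div₀ (by norm_num) (by linarith) (by linarith) le_rfl

lemma choose_le_card (n M : ℕ) :
    n.choose M ≤ (univ.filter fun ξ : Fin n → Bool => partialOnes ξ n = M).card := by
  have h1 : n.choose M = ((univ : Finset (Fin n)).powersetCard M).card := by
    rw [Finset.card_powersetCard, Finset.card_univ, Fintype.card_fin]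
  rw [h1]
  apply Finset.card_le_card_of_injOn (fun A : Finset (Fin n) => fun s => decide (s ∈ A))
  · intro A hA
    simp only [mem_coe, Finset.mem_powersetCard] at hA
    simp only [mem_coe, mem_filter, mem_univ, true_and]
    rw [partialOnes_top]
    have hAeq : (univ.filter fun s : Fin n => decide (s ∈ A) = true) = A := by
      ext s; simp
    rw [hAeq]; exact hA.2
  · intro A₁ h₁ A₂ h₂ heq
    ext s
    have hs := congrFun heq s
    simpa [decide_eq_decide] using hs

lemma per_t_bound {β u v : ℝ} (hβ : 0 < β) (hβu : β < u) (huv : u ≤ v) (hu1 : u < 1)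
    {n m t : ℕ} (hm : (m:ℝ) ≤ β * n) (ht : t ≤ n) (hn : 1 ≤ n) (B : ℕ) :
    ((∑ j ∈ Icc (⌈((B+1:ℕ):ℝ) + v * t⌉₊) m, t.choose j * (n-t).choose (m - j) : ℕ) : ℝ)
      ≤ ((1-u)*β/(u*(1-β)))^B * ((((1-u)*β/(u*(1-β))) ^ (v-u) : ℝ))^t * (n.choose m)
          * (1/(1-((1-u)*β/(u*(1-β))))) := by
  have hu0 : 0 < u := hβ.trans hβu
  have h1u : 0 < 1 - u := by linarith
  have h1β : 0 < 1 - β := by linarith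
  set q : ℝ := (1-u)*β/(u*(1-β)) with hqdef
  have hq0 : 0 < q := by rw [hqdef]; positivity
  have hq1 : q < 1 := by
    rw [hqdef, div_lt_one (by positivity)]
    nlinarith
  set θ : ℝ := q ^ (v-u) with hθdef
  have hθ0 : 0 < θ := Real.rpow_pos_of_pos hq0 _
  set k := ⌈((B+1:ℕ):ℝ) + v * t⌉₊ with hk
  set j0 := ⌈u * (t:ℝ)⌉₊ with hj0
  have hvt0 : (0:ℝ) ≤ v * t := mul_nonneg (by linarith) (Nat.cast_nonneg t)
  have hj0k : j0 ≤ k := by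
    apply Nat.ceil_le_ceil
    have h1 : (0:ℝ) ≤ ((B+1:ℕ):ℝ) := Nat.cast_nonneg _
    have h2 : u * (t:ℝ) ≤ v * t := by
      apply mul_le_mul_of_nonneg_right huv (Nat.cast_nonneg t)
    linarith
  have hC0 : (0:ℝ) ≤ (n.choose m : ℝ) := Nat.cast_nonneg _
  push_cast
  have e : ∀ i : ℕ, q^((k+i) - j0) = q^(k - j0) * q^i := by
    intro i; rw [← pow_add]; congr 1; omega
  have hkk : (B:ℝ) + (v-u)*t ≤ ((k - j0 : ℕ) : ℝ) := by
    have h1 : ((B+1:ℕ):ℝ) + v*t ≤ (k:ℝ) := Nat.le_ceil _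
    have h2 : (j0:ℝ) < u*t + 1 := Nat.ceil_lt_add_one (by positivity)
    rw [Nat.cast_sub hj0k]
    push_cast at h1 ⊢
    linarith
  have hpow : q^(k-j0) ≤ q^B * θ^t := by
    have h3 : q^(k-j0) = q ^ (((k - j0 : ℕ) : ℝ)) := (Real.rpow_natCast q _).symm
    rw [h3]
    calc q ^ (((k - j0 : ℕ) : ℝ)) ≤ q ^ ((B:ℝ) + (v-u)*t) :=
          Real.rpow_le_rpow_of_exponent_ge hq0 hq1.le hkk
      _ = q^B * θ^t := by
          rw [Real.rpow_add hq0, Real.rpow_natCast, hθdef, ← Real.rpow_natCast (q ^ (v-u)) t,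
            ← Real.rpow_mul hq0.le]
  calc (∑ j ∈ Icc k m, (t.choose j : ℝ) * ((n-t).choose (m - j) : ℝ))
      ≤ ∑ j ∈ Icc k m, q^(j - j0) * (n.choose m : ℝ) := by
        apply Finset.sum_le_sum
        intro j hj
        obtain ⟨hkj, hjm⟩ := mem_Icc.mp hj
        have hch := f_chain hβ hβu hu1 hm ht hn (j - j0) j (by omega) hjm
        rw [hqdef]
        exact_mod_cast hch
    _ = ∑ i ∈ range (m+1-k), q^((k+i) - j0) * (n.choose m : ℝ) := by
        rw [← Finset.Ico_add_one_right_eq_Icc, Finset.sum_Ico_eq_sum_range]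
    _ = q^(k-j0) * (∑ i ∈ range (m+1-k), q^i) * (n.choose m : ℝ) := by
        simp_rw [e, mul_assoc]
        rw [← Finset.mul_sum, ← Finset.sum_mul]
    _ ≤ (q^B * θ^t) * (1/(1-q)) * (n.choose m : ℝ) := by
        apply mul_le_mul_of_nonneg_right ?_ hC0
        apply mul_le_mul hpow (geom_sum_le_inv hq0.le hq1 _) ?_ ?_
        · apply Finset.sum_nonneg; intro i _; positivity
        · positivity
    _ = q^B * θ^t * (n.choose m : ℝ) * (1/(1-q)) := by ring

/-- Let `0 < β < v < 1`.  Then there exist a positive integer `A`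
and `n₀` such that for every `n ≥ n₀`, with `m = ⌊βn⌋` and `(ξ_1,…,ξ_n)`
uniformly distributed over all 0-1 sequences of length `n` with exactly `m`
ones, one has `P[∃ 1 ≤ t ≤ n, Σ_{s=1}^t ξ_s ≥ A + v·t] ≤ 1/2`.
(The uniform probability is expressed by counting: twice the number of bad
sequences is at most the total number of sequences.) -/
theorem uniform_ballot_bound (β v : ℝ) (hβ : 0 < β) (hβv : β < v) (hv : v < 1) :
    ∃ A : ℕ, 0 < A ∧ ∃ n₀ : ℕ, ∀ n : ℕ, n₀ ≤ n →
      2 * ((Finset.univ.filter (fun ξ : Fin n → Bool =>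
              partialOnes ξ n = ⌊β * n⌋₊ ∧
              ∃ t : ℕ, 1 ≤ t ∧ t ≤ n ∧ (A : ℝ) + v * t ≤ (partialOnes ξ t : ℝ))).card)
        ≤ (Finset.univ.filter (fun ξ : Fin n → Bool =>
              partialOnes ξ n = ⌊β * n⌋₊)).card := by
  have hβ1 : β < 1 := hβv.trans hv
  set u : ℝ := (β + v)/2 with hudef
  have hβu : β < u := by rw [hudef]; linarith
  have huv : u < v := by rw [hudef]; linarith
  have hu1 : u < 1 := huv.trans hv
  have hu0 : 0 < u := hβ.trans hβu
  have h1u : 0 < 1 - u := by linarith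
  have h1β : 0 < 1 - β := by linarith
  set q : ℝ := (1-u)*β/(u*(1-β)) with hqdef
  have hq0 : 0 < q := by rw [hqdef]; positivity
  have hq1 : q < 1 := by
    rw [hqdef, div_lt_one (by positivity)]
    nlinarith
  set θ : ℝ := q ^ (v-u) with hθdef
  have hθ0 : 0 < θ := Real.rpow_pos_of_pos hq0 _
  have hθ1 : θ < 1 := Real.rpow_lt_one hq0.le hq1 (by linarith)
  have h1q : 0 < 1 - q := by linarith
  have h1θ : 0 < 1 - θ := by linarith
  obtain ⟨B, hB⟩ := exists_pow_lt_of_lt_one (show (0:ℝ) < (1-q)*(1-θ)/2 by positivity) hq1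
  refine ⟨B + 1, Nat.succ_pos _, 1, ?_⟩
  intro n hn
  set m : ℕ := ⌊β * (n:ℝ)⌋₊ with hmdef
  have hm : (m:ℝ) ≤ β * n := Nat.floor_le (by positivity)
  have hn1 : 1 ≤ n := hn
  -- Step 1: union bound over t
  have hcov1 : (univ.filter (fun ξ : Fin n → Bool =>
        partialOnes ξ n = m ∧
        ∃ t : ℕ, 1 ≤ t ∧ t ≤ n ∧ ((B+1 : ℕ) : ℝ) + v * t ≤ (partialOnes ξ t : ℝ)))
      ⊆ (Icc 1 n).biUnion (fun t => univ.filter (fun ξ : Fin n → Bool =>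
          partialOnes ξ n = m ∧ ((B+1:ℕ):ℝ) + v * t ≤ (partialOnes ξ t : ℝ))) := by
    intro ξ hξ
    simp only [mem_filter, mem_univ, true_and] at hξ
    obtain ⟨hM, t, ht1, htn, hA'⟩ := hξ
    exact mem_biUnion.mpr ⟨t, mem_Icc.mpr ⟨ht1, htn⟩, mem_filter.mpr ⟨mem_univ _, hM, hA'⟩⟩
  have step1 : (univ.filter (fun ξ : Fin n → Bool =>
        partialOnes ξ n = m ∧
        ∃ t : ℕ, 1 ≤ t ∧ t ≤ n ∧ ((B+1 : ℕ) : ℝ) + v * t ≤ (partialOnes ξ t : ℝ))).card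
      ≤ ∑ t ∈ Icc 1 n, (univ.filter (fun ξ : Fin n → Bool =>
          partialOnes ξ n = m ∧ ((B+1:ℕ):ℝ) + v * t ≤ (partialOnes ξ t : ℝ))).card :=
    le_trans (Finset.card_le_card hcov1) Finset.card_biUnion_le
  -- Step 2: per t, partition over value of partial sum
  have step2 : ∀ t ∈ Icc 1 n, (univ.filter (fun ξ : Fin n → Bool =>
        partialOnes ξ n = m ∧ ((B+1:ℕ):ℝ) + v * t ≤ (partialOnes ξ t : ℝ))).card
      ≤ ∑ j ∈ Icc (⌈((B+1:ℕ):ℝ) + v * t⌉₊) m, t.choose j * (n-t).choose (m - j) := by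
    intro t htI
    have htn : t ≤ n := (mem_Icc.mp htI).2
    have hsub : (univ.filter (fun ξ : Fin n → Bool =>
          partialOnes ξ n = m ∧ ((B+1:ℕ):ℝ) + v * t ≤ (partialOnes ξ t : ℝ)))
        ⊆ (Icc (⌈((B+1:ℕ):ℝ) + v * t⌉₊) m).biUnion (fun j =>
            univ.filter (fun ξ : Fin n → Bool =>
              partialOnes ξ n = m ∧ partialOnes ξ t = j)) := by
      intro ξ hξ
      simp only [mem_filter, mem_univ, true_and] at hξ
      obtain ⟨hM, hA'⟩ := hξ
      refine mem_biUnion.mpr ⟨partialOnes ξ t,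
        mem_Icc.mpr ⟨Nat.ceil_le.mpr hA', ?_⟩,
        mem_filter.mpr ⟨mem_univ _, hM, rfl⟩⟩
      rw [← hM]
      exact partialOnes_mono ξ htn
    exact le_trans (Finset.card_le_card hsub)
      (le_trans Finset.card_biUnion_le (Finset.sum_le_sum fun j _ => card_F_le htn))
  have total : (univ.filter (fun ξ : Fin n → Bool =>
        partialOnes ξ n = m ∧
        ∃ t : ℕ, 1 ≤ t ∧ t ≤ n ∧ ((B+1 : ℕ) : ℝ) + v * t ≤ (partialOnes ξ t : ℝ))).card
      ≤ ∑ t ∈ Icc 1 n, ∑ j ∈ Icc (⌈((B+1:ℕ):ℝ) + v * t⌉₊) m,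
          t.choose j * (n-t).choose (m - j) :=
    le_trans step1 (Finset.sum_le_sum step2)
  -- Real estimate
  have real1 : ((∑ t ∈ Icc 1 n, ∑ j ∈ Icc (⌈((B+1:ℕ):ℝ) + v * t⌉₊) m,
          t.choose j * (n-t).choose (m - j) : ℕ) : ℝ)
      ≤ q^B * (n.choose m) * (1/(1-q)) * (1/(1-θ)) := by
    rw [Nat.cast_sum]
    calc (∑ t ∈ Icc 1 n, ((∑ j ∈ Icc (⌈((B+1:ℕ):ℝ) + v * t⌉₊) m,
            t.choose j * (n-t).choose (m - j) : ℕ) : ℝ))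
        ≤ ∑ t ∈ Icc 1 n, q^B * θ^t * (n.choose m) * (1/(1-q)) := by
          apply Finset.sum_le_sum
          intro t htI
          have htn : t ≤ n := (mem_Icc.mp htI).2
          have hpt := per_t_bound hβ hβu huv.le hu1 hm htn hn1 B
          rw [hθdef, hqdef]
          exact hpt
      _ = (q^B * (n.choose m) * (1/(1-q))) * (∑ t ∈ Icc 1 n, θ^t) := by
          rw [Finset.mul_sum]
          apply Finset.sum_congr rfl
          intro t _
          ring
      _ ≤ (q^B * (n.choose m) * (1/(1-q))) * (1/(1-θ)) := by
          apply mul_le_mul_of_nonneg_left ?_ (by positivity)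
          calc ∑ t ∈ Icc 1 n, θ^t ≤ ∑ t ∈ range (n+1), θ^t := by
                apply Finset.sum_le_sum_of_subset_of_nonneg
                · intro x hx
                  simp only [mem_Icc] at hx
                  simp only [mem_range]
                  omega
                · intro i _ _
                  positivity
            _ ≤ 1/(1-θ) := geom_sum_le_inv hθ0.le hθ1 _
      _ = q^B * (n.choose m) * (1/(1-q)) * (1/(1-θ)) := by ring
  -- Conclusion
  have hfin : ((2 * (univ.filter (fun ξ : Fin n → Bool =>
        partialOnes ξ n = m ∧
        ∃ t : ℕ, 1 ≤ t ∧ t ≤ n ∧ ((B+1 : ℕ) : ℝ) + v * t ≤ (partialOnes ξ t : ℝ))).card : ℕ) : ℝ)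
      ≤ ((univ.filter (fun ξ : Fin n → Bool => partialOnes ξ n = m)).card : ℝ) := by
    have h1 : ((univ.filter (fun ξ : Fin n → Bool =>
          partialOnes ξ n = m ∧
          ∃ t : ℕ, 1 ≤ t ∧ t ≤ n ∧ ((B+1 : ℕ) : ℝ) + v * t ≤ (partialOnes ξ t : ℝ))).card : ℝ)
        ≤ q^B * (n.choose m) * (1/(1-q)) * (1/(1-θ)) := by
      refine le_trans ?_ real1
      exact_mod_cast total
    have hC0 : (0:ℝ) ≤ (n.choose m : ℝ) := Nat.cast_nonneg _
    have hkey : 2 * q^B * (1/(1-q)) * (1/(1-θ)) ≤ 1 := by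
      have hle : 2 * q^B ≤ (1-q)*(1-θ) := by nlinarith [hB]
      calc 2 * q^B * (1/(1-q)) * (1/(1-θ))
          = (2 * q^B) / ((1-q)*(1-θ)) := by
            rw [one_div, one_div, div_eq_mul_inv, mul_inv]
            ring
        _ ≤ 1 := (div_le_one (by positivity)).mpr hle
    have h2 : 2 * (q^B * (n.choose m) * (1/(1-q)) * (1/(1-θ))) ≤ (n.choose m : ℝ) := by
      calc 2 * (q^B * (n.choose m) * (1/(1-q)) * (1/(1-θ)))
          = (n.choose m : ℝ) * (2 * q^B * (1/(1-q)) * (1/(1-θ))) := by ring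
        _ ≤ (n.choose m : ℝ) * 1 := mul_le_mul_of_nonneg_left hkey hC0
        _ = (n.choose m : ℝ) := mul_one _
    have h3 : ((n.choose m : ℕ) : ℝ)
        ≤ ((univ.filter fun ξ : Fin n → Bool => partialOnes ξ n = m).card : ℝ) := by
      exact_mod_cast choose_le_card n m
    push_cast
    push_cast at h1
    linarith
  exact_mod_cast hfin
end
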